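/- Every element of ker φ lying in the subring K[x₁,…,xₙ,y₁,…,y_{n−1}] (i.e., not involving yₙ) belongs to the ideal of K[x₁,…,xₙ,y₁,…,y_{n−1}] generated by F₁, …, F_{n−1}; that is, ker φ ∩ K[x₁,…,xₙ,y₁,…,y_{n−1}] = (F₁,…,F_{n−1}). -/

import Mathlib

open MvPolynomial

namespace Stmt14Aux

variable {K : Type*} [Field K]

/-- exponent vector of the image of a monomial under ψ -/
noncomputable def T (N M m : ℕ) (s : (Fin (m+1) ⊕ Fin m) →₀ ℕ) : Fin (m+1) →₀ ℕ :=
  Finsupp.equivFunOnFinite.symm fun j =>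
    N * s (Sum.inl j) +
      M * (Fin.lastCases (∑ i, s (Sum.inr i)) (fun i => s (Sum.inr i)) j)

lemma T_apply_castSucc (N M m : ℕ) (s : (Fin (m+1) ⊕ Fin m) →₀ ℕ) (i : Fin m) :
    T N M m s i.castSucc = N * s (Sum.inl i.castSucc) + M * s (Sum.inr i) := by
  simp [T]

lemma T_apply_last (N M m : ℕ) (s : (Fin (m+1) ⊕ Fin m) →₀ ℕ) :
    T N M m s (Fin.last m) = N * s (Sum.inl (Fin.last m)) + M * ∑ i, s (Sum.inr i) := by
  simp [T]

lemma T_add (N M m : ℕ) (s t : (Fin (m+1) ⊕ Fin m) →₀ ℕ) :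
    T N M m (s + t) = T N M m s + T N M m t := by
  ext j
  induction j using Fin.lastCases with
  | last => simp [T_apply_last, Finset.sum_add_distrib]; ring
  | cast i => simp [T_apply_castSucc]; ring

lemma T_single_inl (N M m : ℕ) (j : Fin (m+1)) (b : ℕ) :
    T N M m (Finsupp.single (Sum.inl j) b) = Finsupp.single j (N * b) := by
  ext k
  induction k using Fin.lastCases with
  | last =>
      simp [T_apply_last, Finsupp.single_apply]
      tauto
  | cast i =>
      simp [T_apply_castSucc, Finsupp.single_apply, Sum.inl.injEq]
      tauto

lemma T_single_inr (N M m : ℕ) (i : Fin m) (b : ℕ) :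
    T N M m (Finsupp.single (Sum.inr i) b) =
      Finsupp.single i.castSucc (M * b) + Finsupp.single (Fin.last m) (M * b) := by
  ext k
  induction k using Fin.lastCases with
  | last =>
      simp [T_apply_last, Finsupp.single_apply, (Fin.castSucc_lt_last _).ne]
  | cast k =>
      simp [T_apply_castSucc, Finsupp.single_apply, (Fin.castSucc_lt_last _).ne,
        (Fin.castSucc_lt_last k).ne', Fin.castSucc_inj]
      tauto


variable {m N M : ℕ}

lemma psi_monomial (ψ : MvPolynomial (Fin (m+1) ⊕ Fin m) K →ₐ[K] MvPolynomial (Fin (m+1)) K)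
    (hl : ∀ j, ψ (X (Sum.inl j)) = X j ^ N)
    (hr : ∀ i : Fin m, ψ (X (Sum.inr i)) = X i.castSucc ^ M * X (Fin.last m) ^ M)
    (s : (Fin (m+1) ⊕ Fin m) →₀ ℕ) (c : K) :
    ψ (monomial s c) = monomial (T N M m s) c := by
  induction s using Finsupp.induction with
  | zero =>
      have hT0 : T N M m 0 = 0 := by
        ext k
        induction k using Fin.lastCases with
        | last => simp [T_apply_last]
        | cast i => simp [T_apply_castSucc]
      rw [hT0, ← C_apply, ← C_apply]
      exact ψ.commutes c
  | single_add a b s ha hb ih =>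
      have hmul : (monomial (Finsupp.single a b + s) c : MvPolynomial (Fin (m+1) ⊕ Fin m) K)
          = monomial (Finsupp.single a b) 1 * monomial s c := by
        rw [monomial_mul, one_mul]
      rw [hmul, map_mul, ih, ← X_pow_eq_monomial, map_pow]
      cases a with
      | inl j =>
          rw [hl j, ← pow_mul, X_pow_eq_monomial, monomial_mul, one_mul, T_add, T_single_inl]
      | inr i =>
          rw [hr i, mul_pow, ← pow_mul, ← pow_mul, X_pow_eq_monomial, X_pow_eq_monomial,
            monomial_mul, monomial_mul, one_mul, one_mul, T_add, T_single_inr]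

lemma cancel (hMN : Nat.Coprime M N) {a a' b b' : ℕ} (hb : b < N) (hb' : b' < N)
    (h : N * a + M * b = N * a' + M * b') : a = a' ∧ b = b' := by
  have hN : 0 < N := lt_of_le_of_lt (Nat.zero_le _) hb
  have h1 : M * b ≡ M * b' [MOD N] := by
    have h2 : N * a + M * b ≡ N * a' + M * b' [MOD N] := h ▸ Nat.ModEq.rfl
    have h3 : N * a ≡ N * a' [MOD N] := by
      unfold Nat.ModEq
      simp [Nat.mul_mod_right]
    exact h3.add_left_cancel h2
  have h4 : b = b' := by
    have h5 := Nat.ModEq.cancel_left_of_coprime hMN.symm h1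
    unfold Nat.ModEq at h5
    rwa [Nat.mod_eq_of_lt hb, Nat.mod_eq_of_lt hb'] at h5
  subst h4
  exact ⟨Nat.eq_of_mul_eq_mul_left hN (by omega), rfl⟩

lemma T_inj (hN : 0 < N) (hMN : Nat.Coprime M N) {s s' : (Fin (m+1) ⊕ Fin m) →₀ ℕ}
    (hs : ∀ i, s (Sum.inr i) < N) (hs' : ∀ i, s' (Sum.inr i) < N)
    (h : T N M m s = T N M m s') : s = s' := by
  have hcs : ∀ i : Fin m, s (Sum.inl i.castSucc) = s' (Sum.inl i.castSucc)
      ∧ s (Sum.inr i) = s' (Sum.inr i) := by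
    intro i
    have h1 : T N M m s i.castSucc = T N M m s' i.castSucc := by rw [h]
    rw [T_apply_castSucc, T_apply_castSucc] at h1
    exact cancel hMN (hs i) (hs' i) h1
  have hlast : s (Sum.inl (Fin.last m)) = s' (Sum.inl (Fin.last m)) := by
    have h1 : T N M m s (Fin.last m) = T N M m s' (Fin.last m) := by rw [h]
    rw [T_apply_last, T_apply_last] at h1
    have hsum : ∑ i, s (Sum.inr i) = ∑ i, s' (Sum.inr i) :=
      Finset.sum_congr rfl fun i _ => (hcs i).2
    rw [hsum] at h1
    exact Nat.eq_of_mul_eq_mul_left hN (by omega)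
  ext v
  cases v with
  | inl j =>
      induction j using Fin.lastCases with
      | last => exact hlast
      | cast i => exact (hcs i).1
  | inr i => exact (hcs i).2

lemma normal_inj (hN : 0 < N) (hMN : Nat.Coprime M N)
    (ψ : MvPolynomial (Fin (m+1) ⊕ Fin m) K →ₐ[K] MvPolynomial (Fin (m+1)) K)
    (hl : ∀ j, ψ (X (Sum.inl j)) = X j ^ N)
    (hr : ∀ i : Fin m, ψ (X (Sum.inr i)) = X i.castSucc ^ M * X (Fin.last m) ^ M)
    {q : MvPolynomial (Fin (m+1) ⊕ Fin m) K}
    (hq : ∀ s ∈ q.support, ∀ i, s (Sum.inr i) < N) (h0 : ψ q = 0) : q = 0 := by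
  by_contra hne
  obtain ⟨s₀, hs₀⟩ := support_nonempty.mpr hne
  have hrep : ψ q = ∑ s ∈ q.support, monomial (T N M m s) (coeff s q) := by
    conv_lhs => rw [← support_sum_monomial_coeff q]
    rw [map_sum]
    exact Finset.sum_congr rfl fun s _ => psi_monomial ψ hl hr s (coeff s q)
  have hc : coeff (T N M m s₀) (ψ q) = coeff s₀ q := by
    rw [hrep, coeff_sum]
    rw [Finset.sum_eq_single s₀]
    · simp [coeff_monomial]
    · intro s hs hne'
      rw [coeff_monomial, if_neg]
      intro hT
      exact hne' (T_inj hN hMN (hq s hs) (hq s₀ hs₀) hT)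
    · intro h
      exact absurd hs₀ h
  rw [h0] at hc
  exact (mem_support_iff.mp hs₀) (by simpa using hc.symm)

/-- the normal form exponent vector: reduce all `y`-exponents mod `N` -/
noncomputable def nf (N M m : ℕ) (s : (Fin (m+1) ⊕ Fin m) →₀ ℕ) : (Fin (m+1) ⊕ Fin m) →₀ ℕ :=
  Finsupp.equivFunOnFinite.symm (Sum.elim
    (fun j => s (Sum.inl j) +
      M * (Fin.lastCases (∑ i, s (Sum.inr i) / N) (fun i => s (Sum.inr i) / N) j))
    (fun i => s (Sum.inr i) % N))

lemma nf_apply_inr (N M m : ℕ) (s : (Fin (m+1) ⊕ Fin m) →₀ ℕ) (i : Fin m) :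
    nf N M m s (Sum.inr i) = s (Sum.inr i) % N := by simp [nf]

lemma nf_apply_inl_castSucc (N M m : ℕ) (s : (Fin (m+1) ⊕ Fin m) →₀ ℕ) (i : Fin m) :
    nf N M m s (Sum.inl i.castSucc) = s (Sum.inl i.castSucc) + M * (s (Sum.inr i) / N) := by
  simp [nf]

lemma nf_apply_inl_last (N M m : ℕ) (s : (Fin (m+1) ⊕ Fin m) →₀ ℕ) :
    nf N M m s (Sum.inl (Fin.last m)) =
      s (Sum.inl (Fin.last m)) + M * ∑ i, s (Sum.inr i) / N := by
  simp [nf]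

section Quot

variable (N M : ℕ) {m : ℕ} (K)

/-- the ideal generated by the binomials -/
noncomputable def I (m : ℕ) : Ideal (MvPolynomial (Fin (m+1) ⊕ Fin m) K) :=
  Ideal.span (Set.range fun i : Fin m =>
    (X (Sum.inr i) ^ N - X (Sum.inl i.castSucc) ^ M * X (Sum.inl (Fin.last m)) ^ M :
      MvPolynomial (Fin (m+1) ⊕ Fin m) K))

variable {K N M}

lemma hF (i : Fin m) :
    (Ideal.Quotient.mk (I K N M m) (X (Sum.inr i))) ^ N =
      Ideal.Quotient.mk (I K N M m) (X (Sum.inl i.castSucc)) ^ M *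
        Ideal.Quotient.mk (I K N M m) (X (Sum.inl (Fin.last m))) ^ M := by
  rw [← map_pow, ← map_pow, ← map_pow, ← map_mul, Ideal.Quotient.eq]
  exact Ideal.subset_span ⟨i, rfl⟩

lemma mk_monomial (s : (Fin (m+1) ⊕ Fin m) →₀ ℕ) (c : K) :
    Ideal.Quotient.mk (I K N M m) (monomial s c) =
      Ideal.Quotient.mk (I K N M m) (monomial (nf N M m s) c) := by
  set π := Ideal.Quotient.mk (I K N M m)
  set xq : Fin (m+1) → _ := fun j => π (X (Sum.inl j))
  set yq : Fin m → _ := fun i => π (X (Sum.inr i))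
  have expand : ∀ t : (Fin (m+1) ⊕ Fin m) →₀ ℕ,
      π (monomial t c) =
        π (C c) * ((∏ j, xq j ^ t (Sum.inl j)) * ∏ i, yq i ^ t (Sum.inr i)) := by
    intro t
    rw [monomial_eq, Finsupp.prod_fintype _ _ (fun v => pow_zero _), Fintype.prod_sum_type,
      map_mul, map_mul, map_prod, map_prod]
    simp only [map_pow]
    rfl
  rw [expand, expand]
  congr 1
  have hy : ∏ i, yq i ^ s (Sum.inr i) =
      ((∏ i, xq i.castSucc ^ (M * (s (Sum.inr i) / N))) *
        xq (Fin.last m) ^ (M * ∑ i, s (Sum.inr i) / N)) *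
      ∏ i, yq i ^ (s (Sum.inr i) % N) := by
    calc ∏ i, yq i ^ s (Sum.inr i)
        = ∏ i, ((xq i.castSucc ^ (M * (s (Sum.inr i) / N)) *
            xq (Fin.last m) ^ (M * (s (Sum.inr i) / N))) * yq i ^ (s (Sum.inr i) % N)) := by
          refine Finset.prod_congr rfl fun i _ => ?_
          conv_lhs => rw [← Nat.div_add_mod (s (Sum.inr i)) N]
          rw [pow_add, pow_mul, hF i, mul_pow, ← pow_mul, ← pow_mul]
      _ = ((∏ i, xq i.castSucc ^ (M * (s (Sum.inr i) / N))) *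
            ∏ i, xq (Fin.last m) ^ (M * (s (Sum.inr i) / N))) *
          ∏ i, yq i ^ (s (Sum.inr i) % N) := by
          rw [Finset.prod_mul_distrib, Finset.prod_mul_distrib]
      _ = _ := by
          rw [Finset.prod_pow_eq_pow_sum, ← Finset.mul_sum]
  have hx : ∏ j, xq j ^ nf N M m s (Sum.inl j) =
      ((∏ j, xq j ^ s (Sum.inl j)) * ∏ i, xq i.castSucc ^ (M * (s (Sum.inr i) / N))) *
        xq (Fin.last m) ^ (M * ∑ i, s (Sum.inr i) / N) := by
    calc ∏ j, xq j ^ nf N M m s (Sum.inl j)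
        = (∏ j, xq j ^ s (Sum.inl j)) *
            ∏ j, xq j ^ (M * (Fin.lastCases (∑ i, s (Sum.inr i) / N)
              (fun i => s (Sum.inr i) / N) j)) := by
          rw [← Finset.prod_mul_distrib]
          refine Finset.prod_congr rfl fun j _ => ?_
          rw [← pow_add]
          rfl
      _ = _ := by
          rw [Fin.prod_univ_castSucc (f := fun j => xq j ^ (M * (Fin.lastCases
            (∑ i, s (Sum.inr i) / N) (fun i => s (Sum.inr i) / N) j)))]
          simp only [Fin.lastCases_castSucc, Fin.lastCases_last]
          ring
  simp only [nf_apply_inr] at *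
  rw [hy, hx]
  ring

lemma ker_eq (hN : 0 < N) (hMN : Nat.Coprime M N)
    (ψ : MvPolynomial (Fin (m+1) ⊕ Fin m) K →ₐ[K] MvPolynomial (Fin (m+1)) K)
    (hl : ∀ j, ψ (X (Sum.inl j)) = X j ^ N)
    (hr : ∀ i : Fin m, ψ (X (Sum.inr i)) = X i.castSucc ^ M * X (Fin.last m) ^ M) :
    RingHom.ker ψ = I K N M m := by
  classical
  have le1 : I K N M m ≤ RingHom.ker ψ := by
    rw [I, Ideal.span_le]
    rintro _ ⟨i, rfl⟩
    simp only [SetLike.mem_coe, RingHom.mem_ker, map_sub, map_mul, map_pow, hl, hr]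
    rw [mul_pow, ← pow_mul, ← pow_mul, ← pow_mul, ← pow_mul, Nat.mul_comm M N, sub_self]
  refine le_antisymm ?_ le1
  intro p hp
  rw [RingHom.mem_ker] at hp
  set r : MvPolynomial (Fin (m+1) ⊕ Fin m) K :=
    ∑ s ∈ p.support, monomial (nf N M m s) (coeff s p) with hrdef
  have hpr : Ideal.Quotient.mk (I K N M m) p = Ideal.Quotient.mk (I K N M m) r := by
    conv_lhs => rw [← support_sum_monomial_coeff p]
    rw [hrdef, map_sum, map_sum]
    exact Finset.sum_congr rfl fun s _ => mk_monomial s _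
  have hmem : p - r ∈ I K N M m := (Ideal.Quotient.eq (I := I K N M m)).mp hpr
  have hψr : ψ r = 0 := by
    have h1 : ψ (p - r) = 0 := le1 hmem
    rw [map_sub, hp, zero_sub, neg_eq_zero] at h1
    exact h1
  have hnormal : ∀ s' ∈ r.support, ∀ i, s' (Sum.inr i) < N := by
    intro s' hs' i
    rw [hrdef] at hs'
    obtain ⟨s, hsp, hs'mem⟩ := Finset.mem_biUnion.mp (support_sum hs')
    have hss : s' = nf N M m s := Finset.mem_singleton.mp (support_monomial_subset hs'mem)
    rw [hss, nf_apply_inr]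
    exact Nat.mod_lt _ hN
  have hr0 : r = 0 := normal_inj hN hMN ψ hl hr hnormal hψr
  rw [hr0, map_zero] at hpr
  exact Ideal.Quotient.eq_zero_iff_mem.mp hpr

end Quot

end Stmt14Aux



/-- In the setting of the paper (`n ≥ 3`, coprime `f > g > 0`,
`(n-1)f ≤ ng`), the part of `ker φ` lying in the subring `K[x₁,…,xₙ,y₁,…,y_{n-1}]` (not
involving `yₙ`) is the ideal generated by `F₁, …, F_{n-1}`: pulling `ker φ` back along the
inclusion `K[x₁,…,xₙ,y₁,…,y_{n-1}] ↪ K[x₁,…,xₙ,y₁,…,yₙ]` gives `(F₁, …, F_{n-1})`. -/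
theorem stmt14 (n : ℕ) (hn : 3 ≤ n) (f g : ℕ) (hco : Nat.Coprime f g)
    (hg : 0 < g) (hgf : g < f) (hng : (n - 1) * f ≤ n * g)
    (K : Type*) [Field K]
    (φ : MvPolynomial (Fin n ⊕ Fin n) K →ₐ[K] MvPolynomial (Fin n) K)
    (hφx : ∀ i : Fin n, φ (X (Sum.inl i)) = X i ^ (f * g))
    (hφy : ∀ i : Fin (n - 1), φ (X (Sum.inr (Fin.castLE (by omega) i))) =
      X (Fin.castLE (by omega) i : Fin n) ^ (f - g) * X (⟨n - 1, by omega⟩ : Fin n) ^ (f - g))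
    (hφyn : φ (X (Sum.inr (⟨n - 1, by omega⟩ : Fin n))) =
      (∏ i : Fin (n - 1), X (Fin.castLE (by omega) i : Fin n) ^ g ^ 2) *
        X (⟨n - 1, by omega⟩ : Fin n) ^ (g * ((n - 1) * g - (n - 2) * f))) :
    Ideal.comap
        (rename (Sum.map (id : Fin n → Fin n) (Fin.castLE (by omega : n - 1 ≤ n))) :
          MvPolynomial (Fin n ⊕ Fin (n - 1)) K →ₐ[K] MvPolynomial (Fin n ⊕ Fin n) K)
        (RingHom.ker φ) =
      Ideal.span (Set.range fun i : Fin (n - 1) =>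
        (X (Sum.inr i) ^ (f * g) -
          X (Sum.inl (Fin.castLE (by omega) i : Fin n)) ^ (f - g) *
            X (Sum.inl (⟨n - 1, by omega⟩ : Fin n)) ^ (f - g) :
          MvPolynomial (Fin n ⊕ Fin (n - 1)) K)) := by
  obtain ⟨m, rfl⟩ : ∃ m, n = m + 1 := ⟨n - 1, by omega⟩
  rw [AlgHom.comap_ker]
  have hN : 0 < f * g := Nat.mul_pos (by omega) hg
  have hMN : Nat.Coprime (f - g) (f * g) := by
    have h1 : Nat.Coprime (f - g) g := (Nat.coprime_sub_self_left hgf.le).mpr hco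
    have h2 : Nat.Coprime (f - g) f := by
      have h3 := Nat.coprime_add_self_right.mpr h1
      rwa [Nat.add_sub_cancel' hgf.le] at h3
    exact h2.mul_right h1
  have key := Stmt14Aux.ker_eq (K := K) hN hMN
    (φ.comp (rename (Sum.map (id : Fin (m+1) → Fin (m+1)) (Fin.castLE (by omega)))))
    (fun j => by
      rw [AlgHom.comp_apply, rename_X]
      exact hφx j)
    (fun i => by
      rw [AlgHom.comp_apply, rename_X]
      exact hφy i)
  exact key
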